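/- Let I ⊆ ℝ be an interval and let y, z : ℝ → ℝ be twice differentiable on I and satisfy y''(s) = (1 − 2·y(s)² − 8·z(s)²)·y(s) and z''(s) = (4 − 2·y(s)² − 8·z(s)²)·z(s) for all s ∈ I. Then the function s ↦ 12·z(s)²·(z(s)² − 1) + 3·y(s)²·z(s)² + z(s)²·y'(s)² − 2·y(s)·y'(s)·z(s)·z'(s) + (3 + y(s)²)·z'(s)² has derivative identically zero on I, hence is constant on I. -/

import Mathlib

/-- **First integral H₂ of the EGJ system.**
If `y, z` are twice differentiable on an interval `I ⊆ ℝ` and satisfy the EGJ system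
`y'' = (1 − 2y² − 8z²)·y`, `z'' = (4 − 2y² − 8z²)·z` on `I`, then the function
`H₂ = 12z²(z² − 1) + 3y²z² + z²(y')² − 2yy'zz' + (3 + y²)(z')²` has derivative
identically zero on `I`, hence is constant on `I`. -/
theorem egj_first_integral_H2
    (I : Set ℝ) (hI : I.OrdConnected)
    (y z y' z' y'' z'' : ℝ → ℝ)
    (hy : ∀ s ∈ I, HasDerivAt y (y' s) s)
    (hy' : ∀ s ∈ I, HasDerivAt y' (y'' s) s)
    (hz : ∀ s ∈ I, HasDerivAt z (z' s) s)
    (hz' : ∀ s ∈ I, HasDerivAt z' (z'' s) s)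
    (hODEy : ∀ s ∈ I, y'' s = (1 - 2 * (y s) ^ 2 - 8 * (z s) ^ 2) * y s)
    (hODEz : ∀ s ∈ I, z'' s = (4 - 2 * (y s) ^ 2 - 8 * (z s) ^ 2) * z s) :
    (∀ s ∈ I, HasDerivAt
      (fun s => 12 * (z s) ^ 2 * ((z s) ^ 2 - 1) + 3 * (y s) ^ 2 * (z s) ^ 2
        + (z s) ^ 2 * (y' s) ^ 2 - 2 * y s * y' s * z s * z' s
        + (3 + (y s) ^ 2) * (z' s) ^ 2) 0 s) ∧
    (∀ s ∈ I, ∀ t ∈ I,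
      12 * (z s) ^ 2 * ((z s) ^ 2 - 1) + 3 * (y s) ^ 2 * (z s) ^ 2
        + (z s) ^ 2 * (y' s) ^ 2 - 2 * y s * y' s * z s * z' s
        + (3 + (y s) ^ 2) * (z' s) ^ 2
      = 12 * (z t) ^ 2 * ((z t) ^ 2 - 1) + 3 * (y t) ^ 2 * (z t) ^ 2
        + (z t) ^ 2 * (y' t) ^ 2 - 2 * y t * y' t * z t * z' t
        + (3 + (y t) ^ 2) * (z' t) ^ 2) := by
  have key : ∀ s ∈ I, HasDerivAt
      (fun s => 12 * (z s) ^ 2 * ((z s) ^ 2 - 1) + 3 * (y s) ^ 2 * (z s) ^ 2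
        + (z s) ^ 2 * (y' s) ^ 2 - 2 * y s * y' s * z s * z' s
        + (3 + (y s) ^ 2) * (z' s) ^ 2) 0 s := by
    intro s hs
    have Hy := hy s hs
    have Hy' := hy' s hs
    have Hz := hz s hs
    have Hz' := hz' s hs
    have t1 := ((Hz.pow 2).const_mul 12).mul ((Hz.pow 2).sub_const 1)
    have t2 := ((Hy.pow 2).const_mul 3).mul (Hz.pow 2)
    have t3 := (Hz.pow 2).mul (Hy'.pow 2)
    have t4 := (((Hy.const_mul 2).mul Hy').mul Hz).mul Hz'
    have t5 := ((Hy.pow 2).const_add 3).mul (Hz'.pow 2)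
    have H := ((((t1.add t2).add t3).sub t4).add t5)
    refine H.congr_deriv ?_
    rw [hODEy s hs, hODEz s hs]; simp only [Pi.mul_apply, Pi.pow_apply]; ring
  refine ⟨key, fun s hs t ht => ?_⟩
  have hc : Convex ℝ I := hI.convex
  have hb := hc.norm_image_sub_le_of_norm_hasDerivWithin_le
    (f := fun s => 12 * (z s) ^ 2 * ((z s) ^ 2 - 1) + 3 * (y s) ^ 2 * (z s) ^ 2
        + (z s) ^ 2 * (y' s) ^ 2 - 2 * y s * y' s * z s * z' s
        + (3 + (y s) ^ 2) * (z' s) ^ 2) (f' := fun _ => 0) (C := 0)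
    (fun x hx => (key x hx).hasDerivWithinAt) (by simp) ht hs
  simp only [norm_zero, zero_mul] at hb
  have := norm_le_zero_iff.mp hb
  linarith [sub_eq_zero.mp this]
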